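/- Let d₁, d₂, M be real numbers with 0 < d₁ < d₂ and M > 0, let n ≥ 1 be a natural number, and let x : ℕ → ℝ satisfy x(n) = x(0) and |d₂·x(i) − d₁·x(i+1)| < M for every i < n. Then |x(0)| < M·d₂/(d₂ − d₁)². -/

import Mathlib

lemma tele_aux (r : ℝ) (x : ℕ → ℝ) (n : ℕ) :
    ∑ i ∈ Finset.range n, r ^ i * (x i - r * x (i + 1)) = x 0 - r ^ n * x n := by
  induction n with
  | zero => simp
  | succ m ih =>
    rw [Finset.sum_range_succ, ih]
    ring

/-- The numerical estimate bounding heights of points on a directed cycle for a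
polarized unbalanced self-correspondence. -/
theorem stmt_13 (d₁ d₂ M : ℝ) (h₁ : 0 < d₁) (h₂ : d₁ < d₂) (hM : 0 < M)
    (n : ℕ) (hn : 1 ≤ n) (x : ℕ → ℝ) (hcyc : x n = x 0)
    (hbd : ∀ i < n, |d₂ * x i - d₁ * x (i + 1)| < M) :
    |x 0| < M * d₂ / (d₂ - d₁) ^ 2 := by
  have hd₂ : (0:ℝ) < d₂ := h₁.trans h₂
  set r : ℝ := d₁ / d₂ with hr
  have hr0 : 0 < r := div_pos h₁ hd₂
  have hr1 : r < 1 := (div_lt_one hd₂).mpr h₂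
  have hrn : r ^ n < 1 := pow_lt_one₀ hr0.le hr1 (by omega)
  have hrn0 : 0 < r ^ n := pow_pos hr0 n
  -- per-edge bound
  have hd₂ne : d₂ ≠ 0 := hd₂.ne'
  have hdne : d₂ - d₁ ≠ 0 := by nlinarith
  have hedge : ∀ i < n, |x i - r * x (i + 1)| < M / d₂ := by
    intro i hi
    have heq : x i - r * x (i + 1) = (d₂ * x i - d₁ * x (i + 1)) / d₂ := by
      rw [hr]
      field_simp
    rw [heq, abs_div, abs_of_pos hd₂]
    exact (div_lt_div_iff_of_pos_right hd₂).mpr (hbd i hi)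
  -- telescoping
  have htel : x 0 - r ^ n * x 0 = ∑ i ∈ Finset.range n, r ^ i * (x i - r * x (i + 1)) := by
    rw [tele_aux, hcyc]
  have hsum : |x 0 - r ^ n * x 0| < ∑ i ∈ Finset.range n, r ^ i * (M / d₂) := by
    rw [htel]
    calc |∑ i ∈ Finset.range n, r ^ i * (x i - r * x (i + 1))|
        ≤ ∑ i ∈ Finset.range n, |r ^ i * (x i - r * x (i + 1))| :=
          Finset.abs_sum_le_sum_abs _ _
      _ < ∑ i ∈ Finset.range n, r ^ i * (M / d₂) := by
          apply Finset.sum_lt_sum_of_nonempty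
          · exact Finset.nonempty_range_iff.mpr (by omega)
          · intro i hi
            rw [abs_mul, abs_of_pos (pow_pos hr0 i)]
            exact mul_lt_mul_of_pos_left (hedge i (Finset.mem_range.mp hi))
              (pow_pos hr0 i)
  have hgeom : ∑ i ∈ Finset.range n, r ^ i * (M / d₂) = (1 - r ^ n) / (1 - r) * (M / d₂) := by
    rw [← Finset.sum_mul, geom_sum_eq hr1.ne]
    congr 1
    rw [← neg_div_neg_eq, neg_sub, neg_sub]
  have habs : |x 0 - r ^ n * x 0| = |x 0| * (1 - r ^ n) := by
    have : x 0 - r ^ n * x 0 = x 0 * (1 - r ^ n) := by ring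
    rw [this, abs_mul, abs_of_pos (show (0:ℝ) < 1 - r ^ n by linarith)]
  rw [habs, hgeom] at hsum
  have h1rn : 0 < 1 - r ^ n := by linarith
  have h1r : 0 < 1 - r := by linarith
  have hx0 : |x 0| < M / d₂ / (1 - r) := by
    have hrw : (1 - r ^ n) / (1 - r) * (M / d₂) = M / d₂ / (1 - r) * (1 - r ^ n) := by
      field_simp
    rw [hrw] at hsum
    exact lt_of_mul_lt_mul_right hsum h1rn.le
  have key : M / d₂ / (1 - r) = M / (d₂ - d₁) := by
    rw [hr, div_div]
    congr 1
    field_simp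
  have hd : 0 < d₂ - d₁ := by linarith
  have hfin : M / (d₂ - d₁) ≤ M * d₂ / (d₂ - d₁) ^ 2 := by
    rw [div_le_div_iff₀ hd (by positivity)]
    nlinarith [mul_pos (mul_pos hM hd) h₁]
  rw [key] at hx0
  linarith
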